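/- Explicit affine adjoint eigenfunction for affine coefficients. Let V, τ₀, β₀ > 0, τ₁, β₁ ≥ 0, μ₀ ∈ ℝ. Suppose Z ∈ ℝ satisfies Z < −V·τ₁, Z < −β₁ and (Z + β₁)(Z + V·τ₁) = V·τ₀·β₀. Set L = −(Z + V·τ₁)/β₀ > 0 and φ(x) = 1 + x/L. Then φ satisfies the adjoint eigenvalue equation with eigenvalue Λ = μ₀ + Z: for every x > 0, −V·(τ₀ + τ₁x)·φ'(x) + (μ₀ + β₁ + β₀x)·φ(x) = (2(β₁ + β₀x)/x)·∫₀^x φ(y)dy + (μ₀ + Z)·φ(x). -/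

import Mathlib

open Set

/-- **Explicit affine adjoint eigenfunction for affine coefficients**: with
`τ(x) = τ₀ + τ₁ x`, `μ ≡ μ₀`, `β(x) = β₁ + β₀ x`, if `Z < −V τ₁`, `Z < −β₁` and
`(Z + β₁)(Z + V τ₁) = V τ₀ β₀`, then with `L = −(Z + V τ₁)/β₀ > 0` the affine function
`φ(x) = 1 + x/L` solves the adjoint eigenvalue equation with eigenvalue `Λ = μ₀ + Z`. -/
theorem adjoint_eigenfunction_affine_coefficients
    (V tau0 beta0 tau1 beta1 mu0 Z : ℝ)
    (hV : 0 < V) (htau0 : 0 < tau0) (hbeta0 : 0 < beta0)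
    (htau1 : 0 ≤ tau1) (hbeta1 : 0 ≤ beta1)
    (hZ1 : Z < -(V * tau1)) (hZ2 : Z < -beta1)
    (hZeq : (Z + beta1) * (Z + V * tau1) = V * tau0 * beta0)
    (L : ℝ) (hL : L = -(Z + V * tau1) / beta0)
    (phi : ℝ → ℝ) (hphi : ∀ x : ℝ, phi x = 1 + x / L) :
    0 < L ∧
    ∀ x > 0,
      -V * (tau0 + tau1 * x) * deriv phi x + (mu0 + beta1 + beta0 * x) * phi x
        = 2 * (beta1 + beta0 * x) / x * (∫ y in (0:ℝ)..x, phi y)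
          + (mu0 + Z) * phi x := by
  have hphi' : phi = fun x : ℝ => 1 + x / L := funext hphi
  have hLpos : 0 < L := by
    rw [hL]
    apply div_pos _ hbeta0
    linarith
  have hLne : L ≠ 0 := ne_of_gt hLpos
  have hLb : L * beta0 = -(Z + V * tau1) := by
    rw [hL]; field_simp
  refine ⟨hLpos, fun x hx => ?_⟩
  have hderiv : deriv phi x = 1 / L := by
    rw [hphi']
    have : HasDerivAt (fun x : ℝ => 1 + x / L) (1 / L) x := by
      simpa using ((hasDerivAt_id x).div_const L).const_add 1
    exact this.deriv
  have hint : (∫ y in (0:ℝ)..x, phi y) = x + x ^ 2 / (2 * L) := by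
    rw [hphi']
    rw [intervalIntegral.integral_add intervalIntegrable_const
      ((intervalIntegral.intervalIntegrable_id).div_const L)]
    simp [intervalIntegral.integral_div, integral_id]
    ring
  rw [hderiv, hint, hphi x]
  have hxne : x ≠ 0 := ne_of_gt hx
  have hVt1 : V * tau1 = -Z - L * beta0 := by linarith
  have hVt0 : V * tau0 = -L * (Z + beta1) := by
    have h : V * tau0 * beta0 = (-L * (Z + beta1)) * beta0 := by
      rw [← hZeq]; linear_combination (Z + beta1) * hLb
    exact mul_right_cancel₀ (ne_of_gt hbeta0) h
  field_simp
  linear_combination (-1) * hVt0 + (-x) * hVt1
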